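/- arXiv:1408.5215 — 2 statements merged into one kernel-verified Lean document; each statement's English description precedes it below -/
import Mathlib

section
/- Let A be an abelian group and (F, Ω) an abelian 3-cocycle with values in ℂˣ (satisfying the pentagon identity and the two hexagon identities). Then the trace Q(i) := Ω(i,i) satisfies the cube identity Q(i+j+k)·Q(i)·Q(j)·Q(k) = Q(i+j)·Q(i+k)·Q(j+k) for all i,j,k ∈ A; that is, Q is a ℂˣ-valued quadratic form on A. -/
/-- The trace Q(i) = Ω(i,i) of an abelian 3-cocycle (F,Ω)
satisfies the cube identity, i.e. it is a ℂˣ-valued quadratic form. -/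
theorem abelian_three_cocycle_trace_cube
    {A : Type*} [AddCommGroup A] (F : A → A → A → ℂˣ) (Ω : A → A → ℂˣ)
    (pentagon : ∀ i j k l : A,
      F i j k * F i (j + k) l * F j k l = F (i + j) k l * F i j (k + l))
    (hexagon1 : ∀ i j k : A,
      (F i j k)⁻¹ * Ω i (j + k) * (F j k i)⁻¹ = Ω i j * (F j i k)⁻¹ * Ω i k)
    (hexagon2 : ∀ i j k : A,
      F i j k * Ω (i + j) k * F k i j = Ω j k * F i k j * Ω i k) :
    ∀ i j k : A,
      Ω (i + j + k) (i + j + k) * Ω i i * Ω j j * Ω k k =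
        Ω (i + j) (i + j) * Ω (i + k) (i + k) * Ω (j + k) (j + k) := by
  have fne : ∀ i j k : A, (F i j k : ℂ) ≠ 0 := fun i j k => Units.ne_zero _
  have H1 : ∀ i j k : A, (Ω i (j + k) : ℂ) * F j i k
      = Ω i j * Ω i k * F i j k * F j k i := by
    intro i j k
    have h := congrArg Units.val (hexagon1 i j k)
    push_cast at h
    field_simp at h
    linear_combination h
  have H2 : ∀ i j k : A, (Ω (i + j) k : ℂ) * F i j k * F k i j
      = Ω j k * Ω i k * F i k j := by
    intro i j k
    have h := congrArg Units.val (hexagon2 i j k)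
    push_cast at h
    linear_combination h
  have P : ∀ i j k l : A, (F i j k : ℂ) * F i (j + k) l * F j k l
      = F (i + j) k l * F i j (k + l) := by
    intro i j k l
    have h := congrArg Units.val (pentagon i j k l)
    push_cast at h
    exact h
  have S1 : ∀ i j : A, (Ω i (i + j) : ℂ) = Ω i i * Ω i j * F i j i := by
    intro i j
    apply mul_right_cancel₀ (fne i i j)
    linear_combination H1 i i j
  have S2 : ∀ i j : A, (Ω j (i + j) : ℂ) = Ω j i * Ω j j * F j i j := by
    intro i j
    apply mul_right_cancel₀ (fne i j j)
    linear_combination H1 j i j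
  -- Q(i+j) = Q i * Q j * Ω i j * Ω j i
  have Qadd : ∀ i j : A, (Ω (i + j) (i + j) : ℂ) = Ω i i * Ω j j * Ω i j * Ω j i := by
    intro i j
    have h := H2 i j (i + j)
    rw [S1 i j, S2 i j] at h
    have p := P i j i j
    rw [show j + i = i + j from add_comm j i] at p
    apply mul_right_cancel₀ (mul_ne_zero (mul_ne_zero (fne i j (i+j)) (fne (i+j) i j))
      (fne i (i+j) j))
    linear_combination (F i (i+j) j : ℂ) * h
      + ((Ω i i : ℂ) * Ω i j * Ω j i * Ω j j * F i (i+j) j) * p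
  -- B(i,j) = Ω i j * Ω j i is bilinear
  have Bbil : ∀ i j k : A, (Ω (i + j) k : ℂ) * Ω k (i + j)
      = Ω i k * Ω k i * Ω j k * Ω k j := by
    intro i j k
    apply mul_right_cancel₀ (mul_ne_zero (mul_ne_zero (fne i j k) (fne k i j)) (fne i k j))
    linear_combination (Ω k (i+j) : ℂ) * F i k j * H2 i j k
      + ((Ω j k : ℂ) * Ω i k * F i k j) * H1 k i j
  intro i j k
  have goal : (Ω (i + j + k) (i + j + k) : ℂ) * Ω i i * Ω j j * Ω k k =
      Ω (i + j) (i + j) * Ω (i + k) (i + k) * Ω (j + k) (j + k) := by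
    rw [Qadd (i + j) k, Qadd i j, Qadd i k, Qadd j k]
    linear_combination ((Ω i i : ℂ)^2 * (Ω j j)^2 * (Ω k k)^2 * Ω i j * Ω j i) * Bbil i j k
  exact Units.ext (by push_cast; exact goal)
end

section
/- Let M₁, M₂ be ℂ-vector spaces, L(-1) an operator on M₂, and I_z : M₁ ⊗ M₁ → M₂((z)) a nonzero linear map with I_z = c·I*_z where I*_z(v⊗u) = e^{zL(-1)}I_{-z}(u⊗v) and c ∈ {±1}. Suppose there exists u ∈ M₁ with I_z(u⊗u) ≠ 0, and let n be the order of the lowest nonzero coefficient of I_z(u⊗u). Then c = (-1)^n. In particular, if n is even then c = 1, and if n is odd then c = -1. -/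
/-- If I = c · I* with c ∈ {±1}, and I(u⊗u) is nonzero with
order n (lowest nonzero coefficient at z^n), then c = (-1)^n. -/
theorem sign_determined_by_order
    {M₁ M₂ : Type*} [AddCommGroup M₁] [Module ℂ M₁]
    [AddCommGroup M₂] [Module ℂ M₂]
    (L : M₂ →ₗ[ℂ] M₂)
    (I : M₁ →ₗ[ℂ] M₁ →ₗ[ℂ] (ℤ → M₂))
    (r : M₁ → M₁ → ℤ)
    (hlaurent : ∀ (u v : M₁) (n : ℤ), n < r u v → I u v n = 0)
    (c : ℂ) (hc : c = 1 ∨ c = -1)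
    (hskew : ∀ (u v : M₁) (n : ℤ),
      I v u n = c •
        ∑ k ∈ Finset.range ((n - r u v).toNat + 1),
          ((-1 : ℂ) ^ (n - (k : ℤ))) •
            (((k.factorial : ℂ)⁻¹) • (L ^ k) (I u v (n - (k : ℤ)))))
    (u : M₁) (n : ℤ)
    (hn : I u u n ≠ 0) (hmin : ∀ m : ℤ, m < n → I u u m = 0) :
    c = (-1 : ℂ) ^ n := by
  have h := hskew u u n
  rw [Finset.sum_eq_single 0 (fun k _ hk => by
        have : n - (k : ℤ) < n := by
          have : (0 : ℤ) < (k : ℤ) := by exact_mod_cast Nat.pos_of_ne_zero hk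
          omega
        rw [hmin _ this]; simp)
      (fun habs => absurd (Finset.mem_range.mpr (Nat.succ_pos _)) habs)] at h
  simp only [Nat.cast_zero, sub_zero, Nat.factorial_zero, Nat.cast_one, inv_one, one_smul,
    pow_zero, Module.End.one_apply, smul_smul] at h
  have key : (c * (-1 : ℂ) ^ n - 1) • I u u n = 0 := by
    rw [sub_smul, one_smul, ← h, sub_self]
  have hz : c * (-1 : ℂ) ^ n - 1 = 0 := by
    rcases smul_eq_zero.mp key with h' | h'
    · exact h'
    · exact absurd h' hn
  have h1 : c * (-1 : ℂ) ^ n = 1 := by linear_combination hz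
  have h2 : (-1 : ℂ) ^ n * (-1 : ℂ) ^ n = 1 := by
    rw [← mul_zpow]; norm_num
  calc c = c * ((-1 : ℂ) ^ n * (-1 : ℂ) ^ n) := by rw [h2, mul_one]
    _ = (c * (-1 : ℂ) ^ n) * (-1 : ℂ) ^ n := by ring
    _ = (-1 : ℂ) ^ n := by rw [h1, one_mul]
end
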